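/- Let α > 1, b > 0, θ > 0, and define G(β) = (1 + b²β²/θ²)² − (4b²/θ²) β (1 + b²β²/θ²) tan(β/2) − 1/α on (0, π). Then G'(β) ≤ −(b²/(2θ⁴))[(θ² + 8b²)β³ + b²β⁵] < 0 on (0, π), G(0⁺) = 1 − 1/α > 0, G(β) → −∞ as β → π⁻, and G has a unique zero in (0, π). -/

import Mathlib

open Real Set

theorem stmt11 (α b θ : ℝ) (hα : 1 < α) (hb : 0 < b) (hθ : 0 < θ)
    (G : ℝ → ℝ)
    (hG : ∀ β, G β = (1 + b^2 * β^2 / θ^2)^2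
        - (4 * b^2 / θ^2) * β * (1 + b^2 * β^2 / θ^2) * Real.tan (β / 2) - 1 / α) :
    (∀ β ∈ Ioo 0 π,
      deriv G β ≤ -(b^2 / (2 * θ^4)) * ((θ^2 + 8 * b^2) * β^3 + b^2 * β^5) ∧
      -(b^2 / (2 * θ^4)) * ((θ^2 + 8 * b^2) * β^3 + b^2 * β^5) < 0) ∧
    Filter.Tendsto G (nhdsWithin 0 (Ioi 0)) (nhds (1 - 1 / α)) ∧
    0 < 1 - 1 / α ∧
    Filter.Tendsto G (nhdsWithin π (Iio π)) Filter.atBot ∧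
    ∃! β, β ∈ Ioo 0 π ∧ G β = 0 := by
  have hθ2 : (0:ℝ) < θ^2 := by positivity
  set c : ℝ := b^2 / θ^2 with hcdef
  have hc0 : 0 < c := by positivity
  have hG' : ∀ β, G β = (1 + c*β^2)^2 - 4*c*β*(1+c*β^2)*Real.tan (β/2) - 1/α := by
    intro β; rw [hG, hcdef]; ring_nf
  have hπ : (0:ℝ) < π := pi_pos
  -- derivative at every point of (-π, π)
  have hderiv : ∀ β ∈ Ioo (-π) π, HasDerivAt G
      (4*c*β*(1+c*β^2) - (4*c*(1+3*c*β^2)*Real.tan (β/2)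
        + 2*c*β*(1+c*β^2)*(1/Real.cos (β/2)^2))) β := by
    intro β hβ
    have hcos : Real.cos (β/2) ≠ 0 := by
      apply ne_of_gt
      apply Real.cos_pos_of_mem_Ioo
      constructor
      · have := hβ.1; linarith
      · have := hβ.2; linarith
    have ht : HasDerivAt (fun x:ℝ => Real.tan (x/2)) (1/Real.cos (β/2)^2 * (1/2)) β := by
      have h := (Real.hasDerivAt_tan hcos).comp β ((hasDerivAt_id β).div_const 2)
      simpa [Function.comp_def] using h
    have hA : HasDerivAt (fun x:ℝ => 1 + c*x^2) (2*c*β) β := by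
      have h := ((hasDerivAt_pow 2 β).const_mul c).const_add 1
      refine h.congr_deriv ?_
      push_cast; ring
    have h1 : HasDerivAt (fun x:ℝ => (1 + c*x^2)^2) (4*c*β*(1+c*β^2)) β := by
      have h := hA.pow 2
      refine h.congr_deriv ?_
      push_cast; ring
    have hf : HasDerivAt (fun x:ℝ => 4*c*x*(1+c*x^2)) (4*c*(1+3*c*β^2)) β := by
      have h := ((hasDerivAt_id β).const_mul (4*c)).mul hA
      refine h.congr_deriv ?_
      simp only [id_eq]
      ring
    have h2 : HasDerivAt (fun x:ℝ => 4*c*x*(1+c*x^2)*Real.tan (x/2))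
        (4*c*(1+3*c*β^2)*Real.tan (β/2) + 2*c*β*(1+c*β^2)*(1/Real.cos (β/2)^2)) β := by
      have h := hf.mul ht
      refine h.congr_deriv ?_
      ring
    have hfun : G = fun x:ℝ => (1 + c*x^2)^2 - 4*c*x*(1+c*x^2)*Real.tan (x/2) - 1/α :=
      funext hG'
    rw [hfun]
    exact (h1.sub h2).sub_const (1/α)
  -- Part 1 : derivative bound
  have part1 : ∀ β ∈ Ioo 0 π,
      deriv G β ≤ -(b^2 / (2 * θ^4)) * ((θ^2 + 8 * b^2) * β^3 + b^2 * β^5) ∧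
      -(b^2 / (2 * θ^4)) * ((θ^2 + 8 * b^2) * β^3 + b^2 * β^5) < 0 := by
    intro β hβ
    have hβ' : β ∈ Ioo (-π) π := ⟨by linarith [hβ.1], hβ.2⟩
    have hd := (hderiv β hβ').deriv
    have hx0 : 0 < β/2 := by linarith [hβ.1]
    have hx1 : β/2 < π/2 := by linarith [hβ.2]
    have hcos : 0 < Real.cos (β/2) := Real.cos_pos_of_mem_Ioo ⟨by linarith, hx1⟩
    have htan : β/2 < Real.tan (β/2) := Real.lt_tan hx0 hx1
    have hcβ2 : 0 ≤ c * β^2 := by positivity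
    have hβ0 : 0 < β := hβ.1
    have hsec : 1 + (β/2)^2 ≤ 1/Real.cos (β/2)^2 := by
      have h2 : 1/Real.cos (β/2)^2 = 1 + Real.tan (β/2)^2 := by
        rw [← Real.inv_one_add_tan_sq hcos.ne', one_div, inv_inv]
      rw [h2]
      nlinarith
    constructor
    · rw [hd]
      have hb1 : 4*c*(1+3*c*β^2)*(β/2) ≤ 4*c*(1+3*c*β^2)*Real.tan (β/2) := by
        apply mul_le_mul_of_nonneg_left htan.le
        nlinarith
      have hb2 : 2*c*β*(1+c*β^2)*(1 + (β/2)^2) ≤ 2*c*β*(1+c*β^2)*(1/Real.cos (β/2)^2) := by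
        apply mul_le_mul_of_nonneg_left hsec
        nlinarith
      have heq : -(b^2 / (2 * θ^4)) * ((θ^2 + 8 * b^2) * β^3 + b^2 * β^5)
          = 4*c*β*(1+c*β^2) - (4*c*(1+3*c*β^2)*(β/2) + 2*c*β*(1+c*β^2)*(1 + (β/2)^2)) := by
        rw [hcdef]
        field_simp
        ring
      rw [heq]
      linarith
    · have hpos : 0 < (θ^2 + 8 * b^2) * β^3 + b^2 * β^5 := by positivity
      have := mul_pos (show 0 < b^2 / (2*θ^4) by positivity) hpos
      linarith
  -- limit at 0⁺
  have htend0 : Filter.Tendsto G (nhdsWithin 0 (Ioi 0)) (nhds (1 - 1/α)) := by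
    have h0 : G 0 = 1 - 1/α := by rw [hG']; simp
    have hc : ContinuousAt G 0 := (hderiv 0 ⟨by linarith, hπ⟩).continuousAt
    have h := hc.continuousWithinAt (s := Ioi 0)
    rw [ContinuousWithinAt, h0] at h
    exact h
  -- positivity of the limit
  have hposlim : 0 < 1 - 1/α := by
    have h1 : 1/α < 1 := by rw [div_lt_one (by linarith)]; exact hα
    linarith
  -- limit at π⁻
  have htendBot : Filter.Tendsto G (nhdsWithin π (Iio π)) Filter.atBot := by
    have htanTop : Filter.Tendsto (fun β:ℝ => Real.tan (β/2)) (nhdsWithin π (Iio π))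
        Filter.atTop := by
      have hmap : Filter.Tendsto (fun β:ℝ => β/2) (nhdsWithin π (Iio π))
          (nhdsWithin (π/2) (Iio (π/2))) := by
        rw [tendsto_nhdsWithin_iff]
        constructor
        · exact ((continuous_id.div_const 2).tendsto π).mono_left nhdsWithin_le_nhds
        · filter_upwards [self_mem_nhdsWithin] with x hx
          have : x < π := hx
          show x/2 < π/2
          linarith
      exact Real.tendsto_tan_pi_div_two.comp hmap
    have hCpos : 0 < 4*c*π*(1+c*π^2) := by positivity
    have hcoef : Filter.Tendsto (fun β:ℝ => 4*c*β*(1+c*β^2)) (nhdsWithin π (Iio π))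
        (nhds (4*c*π*(1+c*π^2))) := by
      have hcont : Continuous (fun β:ℝ => 4*c*β*(1+c*β^2)) := by fun_prop
      exact (hcont.tendsto π).mono_left nhdsWithin_le_nhds
    have hprod : Filter.Tendsto (fun β:ℝ => 4*c*β*(1+c*β^2) * Real.tan (β/2))
        (nhdsWithin π (Iio π)) Filter.atTop :=
      Filter.Tendsto.pos_mul_atTop hCpos hcoef htanTop
    have hconst : Filter.Tendsto (fun β:ℝ => (1+c*β^2)^2 - 1/α) (nhdsWithin π (Iio π))
        (nhds ((1+c*π^2)^2 - 1/α)) := by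
      have hcont : Continuous (fun β:ℝ => (1+c*β^2)^2 - 1/α) := by fun_prop
      exact (hcont.tendsto π).mono_left nhdsWithin_le_nhds
    have h := hconst.add_atBot (Filter.tendsto_neg_atTop_atBot.comp hprod)
    refine h.congr fun β => ?_
    rw [hG' β]
    simp only [Function.comp_apply]
    ring
  refine ⟨part1, htend0, hposlim, htendBot, ?_⟩
  -- unique zero
  have hcontOn : ∀ s : Set ℝ, s ⊆ Ioo (-π) π → ContinuousOn G s := by
    intro s hs x hx
    exact ((hderiv x (hs hx)).continuousAt).continuousWithinAt
  have hanti : StrictAntiOn G (Ioo 0 π) := by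
    apply strictAntiOn_of_deriv_neg (convex_Ioo 0 π)
    · exact hcontOn _ (fun x hx => ⟨by linarith [hx.1], hx.2⟩)
    · rw [interior_Ioo]
      intro x hx
      obtain ⟨hle, hlt⟩ := part1 x hx
      linarith
  have hev1 : ∀ᶠ x in nhdsWithin (0:ℝ) (Ioi 0), 0 < G x :=
    htend0.eventually (eventually_gt_nhds hposlim)
  have hev2 : ∀ᶠ x in nhdsWithin (0:ℝ) (Ioi 0), x ∈ Ioo 0 π :=
    Ioo_mem_nhdsGT_of_mem ⟨le_refl 0, hπ⟩
  obtain ⟨x₁, hx₁G, hx₁mem⟩ := (hev1.and hev2).exists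
  have hev3 : ∀ᶠ x in nhdsWithin π (Iio π), G x < 0 :=
    htendBot.eventually (Filter.eventually_lt_atBot 0)
  have hev4 : ∀ᶠ x in nhdsWithin π (Iio π), x ∈ Ioo x₁ π :=
    Ioo_mem_nhdsLT_of_mem ⟨hx₁mem.2, le_refl π⟩
  obtain ⟨x₂, hx₂G, hx₂mem⟩ := (hev3.and hev4).exists
  have hx12 : x₁ < x₂ := hx₂mem.1
  have hsub : Icc x₁ x₂ ⊆ Ioo 0 π := fun y hy =>
    ⟨lt_of_lt_of_le hx₁mem.1 hy.1, lt_of_le_of_lt hy.2 hx₂mem.2⟩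
  have hcIcc : ContinuousOn G (Icc x₁ x₂) :=
    hcontOn _ (fun y hy => by
      have h := hsub hy; exact ⟨by linarith [h.1], h.2⟩)
  have hivt := intermediate_value_Icc' hx12.le hcIcc
  have h0mem : (0:ℝ) ∈ Icc (G x₂) (G x₁) := ⟨hx₂G.le, hx₁G.le⟩
  obtain ⟨β₀, hβ₀mem, hβ₀⟩ := hivt h0mem
  refine ⟨β₀, ⟨hsub hβ₀mem, hβ₀⟩, ?_⟩
  rintro y ⟨hymem, hyG⟩
  exact hanti.injOn hymem (hsub hβ₀mem) (hyG.trans hβ₀.symm)
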